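/- arXiv:1709.03685 — 5 statements merged into one kernel-verified Lean document; each statement's English description precedes it below -/
import Mathlib

section
/- For every nonempty finite chain c of searches, the set γ⁰(c) of indexes associated to c is nonempty: there exists a nonempty duplicate-free list ℓ whose element set equals the maximal element of c and which covers every search in c. -/
variable {A : Type*} [DecidableEq A]

/-- An index `ℓ` covers a search `s` if the first `|s|` elements of `ℓ` are
exactly the elements of `s`. -/
def Covers (ℓ : List A) (s : Finset A) : Prop :=
  (ℓ.take s.card).toFinset = s

/-- **γ⁰ is nonempty on nonempty chains.**
For every nonempty finite chain `c` of searches (nonempty finite subsets of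
`A`, totally ordered by strict inclusion), there exists a nonempty
duplicate-free list `ℓ` whose element set equals the maximal element of `c`
and which covers every search in `c`. -/
theorem gamma0_nonempty (c : Finset (Finset A)) (hc : c.Nonempty)
    (hsne : ∀ s ∈ c, s.Nonempty)
    (hchain : IsChain (· ⊂ ·) (c : Set (Finset A))) :
    ∃ ℓ : List A, ℓ ≠ [] ∧ ℓ.Nodup ∧
      (ℓ.toFinset ∈ c ∧ ∀ s ∈ c, s ⊆ ℓ.toFinset) ∧
      ∀ s ∈ c, Covers ℓ s := by
  classical
  induction c using Finset.strongInduction with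
  | _ c ih =>
    obtain ⟨m, hm, hmax⟩ := c.exists_maximal hc
    have hsub : ∀ s ∈ c, s ⊆ m := by
      intro s hs
      rcases eq_or_ne s m with rfl | hne
      · exact subset_rfl
      · rcases hchain hs hm hne with h | h
        · exact h.subset
        · exact absurd h (fun h' => (Finset.ssubset_iff_subset_ne.mp h').2 (Finset.Subset.antisymm h'.subset (hmax hs h'.subset)))
    by_cases hcs : c = {m}
    · subst hcs
      refine ⟨m.toList, ?_, m.nodup_toList, ⟨?_, ?_⟩, ?_⟩
      · intro h
        rw [Finset.toList_eq_nil] at h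
        exact Finset.not_nonempty_empty (h ▸ hsne m (Finset.mem_singleton_self m))
      · simp [Finset.toList_toFinset]
      · intro s hs; simp_all [Finset.toList_toFinset]
      · intro s hs
        simp only [Finset.mem_singleton] at hs
        subst hs
        unfold Covers
        rw [List.take_of_length_le (by simp [Finset.length_toList]),
          Finset.toList_toFinset]
    · set c' := c.erase m with hc'
      have hc'ss : c' ⊂ c := Finset.erase_ssubset hm
      have hc'ne : c'.Nonempty := by
        rcases hc with ⟨t, ht⟩
        by_cases htm : t = m
        · obtain ⟨u, hu, hum⟩ : ∃ u ∈ c, u ≠ m := by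
            by_contra h
            push_neg at h
            exact hcs (Finset.eq_singleton_iff_nonempty_unique_mem.mpr ⟨⟨t, ht⟩, h⟩)
          exact ⟨u, Finset.mem_erase.mpr ⟨hum, hu⟩⟩
        · exact ⟨t, Finset.mem_erase.mpr ⟨htm, ht⟩⟩
      obtain ⟨ℓ, hℓne, hℓnd, ⟨hℓmem, hℓsub⟩, hℓcov⟩ :=
        ih c' hc'ss hc'ne (fun s hs => hsne s (Finset.mem_of_mem_erase hs))
          (hchain.mono (by simp [hc', Finset.coe_subset, Finset.erase_subset]))
      set f := ℓ.toFinset with hf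
      have hfm : f ⊆ m := hsub f (Finset.mem_of_mem_erase hℓmem)
      have hfne : f ≠ m := (Finset.mem_erase.mp hℓmem).1
      refine ⟨ℓ ++ (m \ f).toList, by simp [hℓne], ?_, ⟨?_, ?_⟩, ?_⟩
      · rw [List.nodup_append]
        refine ⟨hℓnd, Finset.nodup_toList _, ?_⟩
        intro a ha b hb rfl
        have : a ∈ m \ f := by
          rw [← Finset.mem_toList]; exact hb
        rw [Finset.mem_sdiff] at this
        exact this.2 (by simpa [hf] using ha)
      · have : (ℓ ++ (m \ f).toList).toFinset = m := by
          rw [List.toFinset_append, Finset.toList_toFinset, ← hf,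
            Finset.union_sdiff_of_subset hfm]
        rw [this]; exact hm
      · intro s hs
        rw [List.toFinset_append, Finset.toList_toFinset, ← hf,
          Finset.union_sdiff_of_subset hfm]
        exact hsub s hs
      · have hlen : ℓ.length = f.card := (List.toFinset_card_of_nodup hℓnd).symm
        have hlentot : (ℓ ++ (m \ f).toList).length = m.card := by
          rw [List.length_append, hlen, Finset.length_toList,
            Finset.card_sdiff_of_subset hfm]
          exact Nat.add_sub_cancel' (Finset.card_le_card hfm)
        intro s hs
        rcases eq_or_ne s m with rfl | hne
        · unfold Covers
          rw [List.take_of_length_le (le_of_eq hlentot),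
            List.toFinset_append, Finset.toList_toFinset, ← hf,
            Finset.union_sdiff_of_subset hfm]
        · have hs' : s ∈ c' := Finset.mem_erase.mpr ⟨hne, hs⟩
          have hcard : s.card ≤ ℓ.length := by
            rw [hlen]; exact Finset.card_le_card (hℓsub s hs')
          unfold Covers
          rw [List.take_append_of_le_length hcard]
          exact hℓcov s hs'
end

section
/- If L is a minimum l-cover of S, then the image α¹(L) has the same cardinality as L, i.e. |α¹(L)| = |L| (α preserves the cardinality of optimal index sets). -/
variable {A : Type*} [DecidableEq A]

instance (ℓ : List A) (s : Finset A) : Decidable (Covers ℓ s) := by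
  unfold Covers; infer_instance

/-- `α⁰(ℓ)`: the finite set of searches in `S` covered by the index `ℓ`. -/
def Alpha0 (S : Finset (Finset A)) (ℓ : List A) : Finset (Finset A) :=
  S.filter fun s => Covers ℓ s

/-- **α preserves the cardinality of optimal index sets.**
If `L` is a minimum l-cover of `S` (a finite set of indexes covering every
search in `S`, of minimal cardinality among all such finite l-covers), then
the image `α¹(L) = {α⁰(ℓ) | ℓ ∈ L}` has the same cardinality as `L`. -/
theorem alpha1_card_of_minimum_lCover (S : Finset (Finset A))
    (hS : ∀ s ∈ S, s.Nonempty) (L : Finset (List A))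
    (hLidx : ∀ ℓ ∈ L, ℓ ≠ [] ∧ ℓ.Nodup)
    (hLcover : ∀ s ∈ S, ∃ ℓ ∈ L, Covers ℓ s)
    (hLmin : ∀ L' : Finset (List A), (∀ ℓ ∈ L', ℓ ≠ [] ∧ ℓ.Nodup) →
      (∀ s ∈ S, ∃ ℓ ∈ L', Covers ℓ s) → L.card ≤ L'.card) :
    (L.image (Alpha0 S)).card = L.card := by
  rw [Finset.card_image_of_injOn]
  intro a ha b hb hab
  by_contra hne
  have hcov : ∀ s ∈ S, ∃ ℓ ∈ L.erase b, Covers ℓ s := by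
    intro s hs
    obtain ⟨ℓ, hℓ, hc⟩ := hLcover s hs
    by_cases h : ℓ = b
    · refine ⟨a, Finset.mem_erase.mpr ⟨hne, ha⟩, ?_⟩
      have hmem : s ∈ Alpha0 S b := Finset.mem_filter.mpr ⟨hs, h ▸ hc⟩
      rw [← hab] at hmem
      exact (Finset.mem_filter.mp hmem).2
    · exact ⟨ℓ, Finset.mem_erase.mpr ⟨h, hℓ⟩, hc⟩
  have hle := hLmin (L.erase b) (fun ℓ hℓ => hLidx ℓ (Finset.mem_of_mem_erase hℓ)) hcov
  have hlt := Finset.card_erase_lt_of_mem hb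
  omega
end

section
/- Solution preservation of α: if L is a minimum l-cover of S, then α¹(L) is a minimum c-cover of S, i.e. α¹(L) is a c-cover of S consisting of chains and |α¹(L)| ≤ |C'| for every finite c-cover C' of S by chains. -/
variable {A : Type*} [DecidableEq A]

lemma covers_subset {ℓ : List A} {s t : Finset A} (hs : Covers ℓ s) (ht : Covers ℓ t)
    (h : s.card ≤ t.card) : s ⊆ t := by
  intro x hx
  rw [← hs] at hx
  rw [← ht]
  rw [List.mem_toFinset] at hx ⊢
  have : ℓ.take s.card = (ℓ.take t.card).take s.card := by
    rw [List.take_take, min_eq_left h]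
  rw [this] at hx
  exact (List.take_sublist _ _).mem hx

lemma covers_chain {ℓ : List A} {s t : Finset A} (hs : Covers ℓ s) (ht : Covers ℓ t)
    (hne : s ≠ t) : s ⊂ t ∨ t ⊂ s := by
  rcases le_total s.card t.card with h | h
  · exact Or.inl ((covers_subset hs ht h).ssubset_of_ne hne)
  · exact Or.inr ((covers_subset ht hs h).ssubset_of_ne hne.symm)

lemma card_le_length {ℓ : List A} {s : Finset A} (hn : ℓ.Nodup) (h : Covers ℓ s) :
    s.card ≤ ℓ.length := by
  have h1 : (ℓ.take s.card).toFinset.card = s.card := by rw [h]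
  rw [List.toFinset_card_of_nodup (hn.sublist (List.take_sublist _ _)),
    List.length_take] at h1
  omega

lemma chain_index (c : Finset (Finset A)) (hc : IsChain (· ⊂ ·) (c : Set (Finset A))) :
    ∃ ℓ : List A, ℓ.Nodup ∧ (∀ s ∈ c, Covers ℓ s) ∧ (c = ∅ → ℓ = []) ∧
      (c.Nonempty → ℓ.toFinset ∈ c) := by
  induction c using Finset.strongInduction with
  | _ c ih =>
    rcases c.eq_empty_or_nonempty with rfl | hne
    · exact ⟨[], List.nodup_nil, by simp, fun _ => rfl,
        fun h => (Finset.not_nonempty_empty h).elim⟩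
    · obtain ⟨m, hm, hmax⟩ := c.exists_max_image Finset.card hne
      have hcsub : c.erase m ⊂ c := Finset.erase_ssubset hm
      have hc' : IsChain (· ⊂ ·) ((c.erase m : Finset (Finset A)) : Set (Finset A)) :=
        hc.mono (by simp [Finset.coe_subset])
      obtain ⟨ℓ', hnod, hcov, hemp, hmem⟩ := ih _ hcsub hc'
      -- ℓ'.toFinset ⊆ m
      have hsub : ℓ'.toFinset ⊆ m := by
        rcases (c.erase m).eq_empty_or_nonempty with he | hne'
        · simp [hemp he]
        · have h1 := hmem hne'
          have h2 : ℓ'.toFinset ≠ m := (Finset.mem_erase.mp h1).1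
          have h3 : ℓ'.toFinset ∈ c := Finset.mem_of_mem_erase h1
          rcases hc h3 hm h2 with h | h
          · exact h.subset
          · exact absurd (hmax _ h3) (by simpa using (Finset.card_lt_card h).not_ge)
      refine ⟨ℓ' ++ (m \ ℓ'.toFinset).toList, ?_, ?_, ?_, ?_⟩
      · refine hnod.append (Finset.nodup_toList _) ?_
        intro x hx hx'
        rw [Finset.mem_toList, Finset.mem_sdiff] at hx'
        exact hx'.2 (List.mem_toFinset.mpr hx)
      · have hlen : ℓ'.length = ℓ'.toFinset.card := (List.toFinset_card_of_nodup hnod).symm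
        have hlentot : (ℓ' ++ (m \ ℓ'.toFinset).toList).length = m.card := by
          rw [List.length_append, hlen, Finset.length_toList,
            Nat.add_comm, Finset.card_sdiff_add_card_eq_card hsub]
        intro s hs
        by_cases hsm : s = m
        · subst hsm
          unfold Covers
          rw [List.take_of_length_le hlentot.le, List.toFinset_append,
            Finset.toList_toFinset, Finset.union_sdiff_of_subset hsub]
        · have hs' : s ∈ c.erase m := Finset.mem_erase.mpr ⟨hsm, hs⟩
          have hcv := hcov s hs'
          have hle : s.card ≤ ℓ'.length := card_le_length hnod hcv
          unfold Covers
          rw [List.take_append_of_le_length hle]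
          exact hcv
      · intro h
        exact absurd h hne.ne_empty
      · intro _
        have : (ℓ' ++ (m \ ℓ'.toFinset).toList).toFinset = m := by
          rw [List.toFinset_append, Finset.toList_toFinset,
            Finset.union_sdiff_of_subset hsub]
        rw [this]; exact hm

/-- **Solution preservation of α.**
If `L` is a minimum l-cover of `S`, then `α¹(L) = {α⁰(ℓ) | ℓ ∈ L}` is a
minimum c-cover of `S`: it consists of chains of searches, it is a c-cover of
`S`, and `|α¹(L)| ≤ |C'|` for every finite c-cover `C'` of `S` by chains. -/
theorem alpha1_minimum_cCover (S : Finset (Finset A))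
    (hS : ∀ s ∈ S, s.Nonempty) (L : Finset (List A))
    (hLidx : ∀ ℓ ∈ L, ℓ ≠ [] ∧ ℓ.Nodup)
    (hLcover : ∀ s ∈ S, ∃ ℓ ∈ L, Covers ℓ s)
    (hLmin : ∀ L' : Finset (List A), (∀ ℓ ∈ L', ℓ ≠ [] ∧ ℓ.Nodup) →
      (∀ s ∈ S, ∃ ℓ ∈ L', Covers ℓ s) → L.card ≤ L'.card) :
    (∀ c ∈ L.image (Alpha0 S), (∀ s ∈ c, s.Nonempty) ∧
        IsChain (· ⊂ ·) (c : Set (Finset A))) ∧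
    (∀ s ∈ S, ∃ c ∈ L.image (Alpha0 S), s ∈ c) ∧
    (∀ C' : Finset (Finset (Finset A)),
      (∀ c ∈ C', (∀ s ∈ c, s.Nonempty) ∧ IsChain (· ⊂ ·) (c : Set (Finset A))) →
      (∀ s ∈ S, ∃ c ∈ C', s ∈ c) →
      (L.image (Alpha0 S)).card ≤ C'.card) := by
  refine ⟨?_, ?_, ?_⟩
  · intro c hc
    obtain ⟨ℓ, hℓ, rfl⟩ := Finset.mem_image.mp hc
    constructor
    · intro s hs
      exact hS s (Finset.mem_filter.mp hs).1
    · intro s hs t ht hst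
      rw [Finset.mem_coe, Alpha0, Finset.mem_filter] at hs ht
      exact covers_chain hs.2 ht.2 hst
  · intro s hs
    obtain ⟨ℓ, hℓL, hcov⟩ := hLcover s hs
    exact ⟨Alpha0 S ℓ, Finset.mem_image_of_mem _ hℓL, Finset.mem_filter.mpr ⟨hs, hcov⟩⟩
  · intro C' hC'chains hC'cover
    have hex : ∀ c ∈ C', ∃ ℓ : List A, ℓ.Nodup ∧ (∀ s ∈ c, Covers ℓ s) := by
      intro c hc
      obtain ⟨ℓ, h1, h2, _, _⟩ := chain_index c (hC'chains c hc).2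
      exact ⟨ℓ, h1, h2⟩
    choose g hg1 hg2 using hex
    set L' : Finset (List A) :=
      (C'.attach.image fun x => g x.1 x.2).filter (· ≠ []) with hL'def
    have hL'idx : ∀ ℓ ∈ L', ℓ ≠ [] ∧ ℓ.Nodup := by
      intro ℓ hℓ
      obtain ⟨h1, h2⟩ := Finset.mem_filter.mp hℓ
      obtain ⟨x, _, rfl⟩ := Finset.mem_image.mp h1
      exact ⟨h2, hg1 _ _⟩
    have hL'cover : ∀ s ∈ S, ∃ ℓ ∈ L', Covers ℓ s := by
      intro s hs
      obtain ⟨c, hc, hsc⟩ := hC'cover s hs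
      have hcov := hg2 c hc s hsc
      have hne : g c hc ≠ [] := by
        intro h
        rw [h] at hcov
        unfold Covers at hcov
        simp at hcov
        exact (hS s hs).ne_empty hcov.symm
      exact ⟨g c hc, Finset.mem_filter.mpr
        ⟨Finset.mem_image.mpr ⟨⟨c, hc⟩, Finset.mem_attach _ _, rfl⟩, hne⟩, hcov⟩
    calc (L.image (Alpha0 S)).card ≤ L.card := Finset.card_image_le
      _ ≤ L'.card := hLmin L' hL'idx hL'cover
      _ ≤ (C'.attach.image fun x => g x.1 x.2).card := Finset.card_filter_le _ _
      _ ≤ C'.attach.card := Finset.card_image_le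
      _ = C'.card := Finset.card_attach
end

section
/- Solution preservation of γ: if C is a minimum c-cover of S consisting of nonempty chains of searches in S, then every index set L ∈ γ¹(C) is a minimum l-cover of S. -/
variable {A : Type*} [DecidableEq A]

/-- `γ⁰(c)`: the set of indexes whose element set is exactly the maximal
element of the chain `c` and which cover every search in `c`. -/
def Gamma0 (c : Finset (Finset A)) : Set (List A) :=
  {ℓ | ℓ ≠ [] ∧ ℓ.Nodup ∧ (ℓ.toFinset ∈ c ∧ ∀ s ∈ c, s ⊆ ℓ.toFinset) ∧
    ∀ s ∈ c, Covers ℓ s}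

lemma covers_subset_s12 {ℓ : List A} {s₁ s₂ : Finset A} (h1 : Covers ℓ s₁)
    (h2 : Covers ℓ s₂) (hle : s₁.card ≤ s₂.card) : s₁ ⊆ s₂ := by
  rw [← h1, ← h2]
  intro a ha
  rw [List.mem_toFinset] at ha ⊢
  have : ℓ.take s₁.card = (ℓ.take s₂.card).take s₁.card := by
    rw [List.take_take, min_eq_left hle]
  rw [this] at ha
  exact List.take_subset _ _ ha

/-- **Solution preservation of γ.**
If `C` is a minimum c-cover of `S` consisting of nonempty chains of searches
in `S` (a finite c-cover of `S` by chains, of minimal cardinality among all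
such finite c-covers by chains), then every index set `L ∈ γ¹(C)` (i.e. every
`L = {f(c) | c ∈ C}` for a choice function `f` with `f(c) ∈ γ⁰(c)`) is a
minimum l-cover of `S`. -/
theorem gamma1_minimum_lCover (S : Finset (Finset A))
    (hS : ∀ s ∈ S, s.Nonempty) (C : Finset (Finset (Finset A)))
    (hC : ∀ c ∈ C, (c : Finset (Finset A)).Nonempty ∧ (∀ s ∈ c, s ∈ S) ∧
      IsChain (· ⊂ ·) (c : Set (Finset A)))
    (hCcover : ∀ s ∈ S, ∃ c ∈ C, s ∈ c)
    (hCmin : ∀ C' : Finset (Finset (Finset A)),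
      (∀ c ∈ C', (∀ s ∈ c, s.Nonempty) ∧ IsChain (· ⊂ ·) (c : Set (Finset A))) →
      (∀ s ∈ S, ∃ c ∈ C', s ∈ c) → C.card ≤ C'.card) :
    ∀ L : Finset (List A), ∀ f : Finset (Finset A) → List A,
      (∀ c ∈ C, f c ∈ Gamma0 c) → L = C.image f →
      (∀ s ∈ S, ∃ ℓ ∈ L, Covers ℓ s) ∧
      (∀ L' : Finset (List A), (∀ ℓ ∈ L', ℓ ≠ [] ∧ ℓ.Nodup) →
        (∀ s ∈ S, ∃ ℓ ∈ L', Covers ℓ s) → L.card ≤ L'.card) := by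
  intro L f hf hL
  constructor
  · intro s hs
    obtain ⟨c, hcC, hsc⟩ := hCcover s hs
    refine ⟨f c, ?_, (hf c hcC).2.2.2 s hsc⟩
    rw [hL]; exact Finset.mem_image_of_mem f hcC
  · intro L' hL' hL'cover
    classical
    set C' : Finset (Finset (Finset A)) :=
      L'.image (fun ℓ => S.filter (fun s => Covers ℓ s)) with hC'
    have h1 : ∀ c ∈ C', (∀ s ∈ c, s.Nonempty) ∧
        IsChain (· ⊂ ·) (c : Set (Finset A)) := by
      intro c hc
      obtain ⟨ℓ, _, rfl⟩ := Finset.mem_image.mp hc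
      constructor
      · intro s hsin
        exact hS s (Finset.mem_filter.mp hsin).1
      · intro s₁ hs₁ s₂ hs₂ hne
        simp only [Finset.coe_filter, Set.mem_setOf_eq] at hs₁ hs₂
        rcases le_total s₁.card s₂.card with h | h
        · exact Or.inl (ssubset_of_subset_of_ne (covers_subset_s12 hs₁.2 hs₂.2 h) hne)
        · exact Or.inr (ssubset_of_subset_of_ne (covers_subset_s12 hs₂.2 hs₁.2 h) hne.symm)
    have h2 : ∀ s ∈ S, ∃ c ∈ C', s ∈ c := by
      intro s hs
      obtain ⟨ℓ, hℓ, hcov⟩ := hL'cover s hs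
      exact ⟨S.filter (fun s => Covers ℓ s),
        Finset.mem_image_of_mem _ hℓ, Finset.mem_filter.mpr ⟨hs, hcov⟩⟩
    calc L.card ≤ C.card := by rw [hL]; exact Finset.card_image_le
      _ ≤ C'.card := hCmin C' h1 h2
      _ ≤ L'.card := Finset.card_image_le
end

section
/- Range search cover: let D be a linear order with a least element ⊥ and a greatest element ⊤, let m be a natural number, and let ℓ be a duplicate-free list of attributes in Fin m of length p. Fix k ≤ p and values v : Fin m → D. Define a, b : Fin m → D by a(i) = v(i) and b(i) = v(i) if i is among the first k elements of ℓ, and a(i) = ⊥, b(i) = ⊤ otherwise. Let ≼ be the lexicographic order along ℓ, i.e. t ≼ t' iff the list (ℓ.map t) is ≤ the list (ℓ.map t') in the lexicographic order on lists over D. Then for every set R of tuples t : Fin m → D, the primitive search {t ∈ R | t(x) = v(x) for every attribute x among the first k elements of ℓ} equals the range search {t ∈ R | a ≼ t and t ≼ b}. -/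
private lemma lex_le_of_forall_le {α} [LinearOrder α] :
    ∀ {l l' : List α}, List.Forall₂ (· ≤ ·) l l' → l ≤ l'
  | _, _, List.Forall₂.nil => le_rfl
  | _, _, List.Forall₂.cons (a := a) (b := b) hab h => by
      rcases lt_or_eq_of_le hab with h' | rfl
      · exact le_of_lt (List.Lex.rel h')
      · exact List.cons_le_cons a (lex_le_of_forall_le h)

private lemma lex_head_le {α} [LinearOrder α] {a b : α} {l l' : List α}
    (h : a :: l ≤ b :: l') : a ≤ b := by
  rcases lt_or_eq_of_le h with h' | h'
  · exact List.head_le_of_lt h'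
  · simp_all

private lemma lex_tail_le {α} [LinearOrder α] {a : α} {l l' : List α}
    (h : a :: l ≤ a :: l') : l ≤ l' := by
  rcases lt_or_eq_of_le h with h' | h'
  · cases h' with
    | cons h'' => exact le_of_lt h''
    | rel h'' => exact absurd h'' (lt_irrefl a)
  · simp_all

private lemma lex_sandwich {α} [LinearOrder α] :
    ∀ (c : List α) {l₁ l₂ l₃ : List α}, c ++ l₁ ≤ l₂ → l₂ ≤ c ++ l₃ →
      ∃ r, l₂ = c ++ r
  | [], l₁, l₂, l₃, _, _ => ⟨l₂, rfl⟩
  | a :: c, l₁, l₂, l₃, h₁, h₂ => by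
      cases l₂ with
      | nil =>
        exact absurd (le_antisymm h₁ (le_of_lt List.Lex.nil)) (by simp)
      | cons b tl =>
        have hab : a = b := le_antisymm (lex_head_le h₁) (lex_head_le h₂)
        subst hab
        obtain ⟨r, hr⟩ := lex_sandwich c (lex_tail_le h₁) (lex_tail_le h₂)
        exact ⟨r, by rw [List.cons_append, hr]⟩

/-- **Range search cover.**
Let `D` be a linear order with a least element `⊥` and a greatest element `⊤`,
`m` a natural number, and `ℓ` a duplicate-free list of attributes in `Fin m`
of length `p`. Fix `k ≤ p` and values `v : Fin m → D`. Define the bounds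
`a, b : Fin m → D` by `a i = v i = b i` if `i` is among the first `k` elements
of `ℓ`, and `a i = ⊥`, `b i = ⊤` otherwise. Comparing tuples `t, t'` by
comparing `ℓ.map t` and `ℓ.map t'` in the lexicographic order on lists, for
every set `R` of tuples the primitive search
`{t ∈ R | t x = v x for all x among the first k elements of ℓ}` equals the
range search `{t ∈ R | a ≼ t ∧ t ≼ b}`. -/
theorem range_search_cover (D : Type*) [LinearOrder D] [OrderBot D] [OrderTop D]
    (m : ℕ) (ℓ : List (Fin m)) (hnd : ℓ.Nodup) (p : ℕ) (hp : ℓ.length = p)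
    (k : ℕ) (hk : k ≤ p) (v : Fin m → D) (a b : Fin m → D)
    (ha : ∀ i : Fin m, a i = if i ∈ ℓ.take k then v i else ⊥)
    (hb : ∀ i : Fin m, b i = if i ∈ ℓ.take k then v i else ⊤)
    (R : Set (Fin m → D)) :
    {t ∈ R | ∀ x ∈ ℓ.take k, t x = v x} =
      {t ∈ R | ℓ.map a ≤ ℓ.map t ∧ ℓ.map t ≤ ℓ.map b} := by
  ext t
  simp only [Set.mem_setOf_eq]
  refine and_congr_right fun _ => ⟨fun h => ?_, fun h => ?_⟩
  · constructor
    · refine lex_le_of_forall_le ?_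
      rw [List.forall₂_map_right_iff, List.forall₂_map_left_iff]
      refine List.forall₂_same.mpr fun x hx => ?_
      rw [ha x]
      split_ifs with hx'
      · rw [h x hx']
      · exact bot_le
    · refine lex_le_of_forall_le ?_
      rw [List.forall₂_map_right_iff, List.forall₂_map_left_iff]
      refine List.forall₂_same.mpr fun x hx => ?_
      rw [hb x]
      split_ifs with hx'
      · rw [h x hx']
      · exact le_top
  · -- reverse
    have hva : List.map v (ℓ.take k) = List.map a (ℓ.take k) :=
      List.map_congr_left fun x hx => by rw [ha x, if_pos hx]
    have hvb : List.map v (ℓ.take k) = List.map b (ℓ.take k) :=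
      List.map_congr_left fun x hx => by rw [hb x, if_pos hx]
    have hsplit : ∀ f : Fin m → D,
        ℓ.map f = (ℓ.take k).map f ++ (ℓ.drop k).map f := by
      intro f; rw [← List.map_append, List.take_append_drop]
    have h1 : List.map v (ℓ.take k) ++ (ℓ.drop k).map a ≤ ℓ.map t := by
      rw [hva, ← List.map_append, List.take_append_drop]; exact h.1
    have h2 : ℓ.map t ≤ List.map v (ℓ.take k) ++ (ℓ.drop k).map b := by
      rw [hvb, ← List.map_append, List.take_append_drop]; exact h.2
    obtain ⟨r, hr⟩ := lex_sandwich _ h1 h2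
    rw [hsplit t] at hr
    have heq := (List.append_inj hr (by simp)).1
    intro x hx
    exact List.map_eq_map_iff.mp heq x hx
end
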